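/- For real a > 0 with a ≠ 1 and any x ∈ ℝ, the Fourier series identity a^{-{x}} = ((a-1)/a) · ∑_{n∈ℤ} e^{2πinx}/(log a + 2πin) holds pointwise at every x that is not an integer, where {x} = x - ⌊x⌋ denotes the fractional part of x. -/

import Mathlib

open Complex Filter MeasureTheory Set

private lemma denom_ne {c : ℝ} (hc : c ≠ 0) (n : ℤ) :
    (c : ℂ) + 2 * Real.pi * Complex.I * n ≠ 0 := by
  intro h
  have := congrArg Complex.re h
  simp [Complex.add_re, Complex.mul_re, Complex.mul_im] at this
  exact hc this

private lemma exp_zpow (n : ℤ) (t : ℝ) :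
    Complex.exp (2 * Real.pi * Complex.I * n * t) = Complex.exp (2 * Real.pi * Complex.I * t) ^ n := by
  rw [← Complex.exp_int_mul]
  ring_nf

private lemma norm_exp_sub_one (u : ℝ) :
    ‖Complex.exp (2 * Real.pi * Complex.I * u) - 1‖ = 2 * |Real.sin (Real.pi * u)| := by
  have e1 : Complex.exp ((Real.pi * u : ℝ) * Complex.I) * Complex.exp ((Real.pi * u : ℝ) * Complex.I)
      = Complex.exp (2 * Real.pi * Complex.I * u) := by
    rw [← Complex.exp_add]; congr 1; push_cast; ring
  have e2 : Complex.exp ((Real.pi * u : ℝ) * Complex.I) * Complex.exp (-((Real.pi * u : ℝ) * Complex.I))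
      = 1 := by
    rw [← Complex.exp_add, add_neg_cancel, Complex.exp_zero]
  have e3 : Complex.exp ((Real.pi * u : ℝ) * Complex.I) - Complex.exp (-((Real.pi * u : ℝ) * Complex.I))
      = 2 * Complex.I * Complex.sin ((Real.pi * u : ℝ)) := by
    rw [Complex.sin]
    have : -((Real.pi * u : ℝ) : ℂ) * Complex.I = -(((Real.pi * u : ℝ) : ℂ) * Complex.I) := by ring
    rw [this]
    field_simp
    ring_nf
    rw [Complex.I_sq]
    ring
  have key : Complex.exp (2 * Real.pi * Complex.I * u) - 1
      = Complex.exp ((Real.pi * u : ℝ) * Complex.I) * (2 * Complex.I * Complex.sin ((Real.pi * u : ℝ))) := by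
    rw [← e3, mul_sub, e1, e2]
  rw [key, norm_mul, Complex.norm_exp_ofReal_mul_I,
    one_mul, ← Complex.ofReal_sin]
  rw [show ((2:ℂ)*Complex.I*(Real.sin (Real.pi*u) : ℂ)) = ((2*Real.sin (Real.pi*u) : ℝ))*Complex.I by push_cast; ring]
  rw [norm_mul, Complex.norm_I, mul_one, Complex.norm_real, Real.norm_eq_abs, abs_mul]
  norm_num

private lemma sin_lower {u : ℝ} (h0 : 0 ≤ u) (h1 : u ≤ 1) :
    2 * min u (1 - u) ≤ Real.sin (Real.pi * u) := by
  rcases le_or_gt u (1/2) with h | h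
  · have hle : Real.pi * u ≤ Real.pi / 2 := by
      rw [div_eq_mul_inv]
      calc Real.pi * u ≤ Real.pi * (1/2) := by
            exact mul_le_mul_of_nonneg_left h Real.pi_pos.le
        _ = Real.pi * 2⁻¹ := by norm_num
    have := Real.mul_le_sin (x := Real.pi * u) (by positivity) hle
    have h2 : 2 / Real.pi * (Real.pi * u) = 2 * u := by
      field_simp
    rw [h2] at this
    have hm : 2 * min u (1-u) ≤ 2 * u := by
      have := min_le_left u (1-u); linarith
    linarith
  · have h0' : 0 ≤ 1 - u := by linarith
    have hle : Real.pi * (1 - u) ≤ Real.pi / 2 := by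
      calc Real.pi * (1-u) ≤ Real.pi * (1/2) := by
            exact mul_le_mul_of_nonneg_left (by linarith) Real.pi_pos.le
        _ = Real.pi / 2 := by ring
    have key := Real.mul_le_sin (x := Real.pi * (1 - u)) (by positivity) hle
    have h2 : 2 / Real.pi * (Real.pi * (1 - u)) = 2 * (1 - u) := by
      field_simp
    rw [h2] at key
    have hs : Real.sin (Real.pi * (1 - u)) = Real.sin (Real.pi * u) := by
      rw [show Real.pi * (1 - u) = Real.pi - Real.pi * u by ring, Real.sin_pi_sub]
    rw [hs] at key
    have : min u (1-u) ≤ 1 - u := min_le_right _ _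
    linarith

private lemma exp_lip {p q R : ℝ} (hp : |p| ≤ R) (hq : |q| ≤ R) :
    |Real.exp p - Real.exp q| ≤ Real.exp R * |p - q| := by
  wlog hqp : q ≤ p generalizing p q
  · have := this hq hp (by linarith)
    rw [abs_sub_comm, abs_sub_comm q p] at this
    exact this
  have h1 : Real.exp q ≤ Real.exp p := Real.exp_le_exp.2 hqp
  rw [_root_.abs_of_nonneg (by linarith : (0:ℝ) ≤ Real.exp p - Real.exp q), _root_.abs_of_nonneg (by linarith : (0:ℝ) ≤ p - q)]
  have key : Real.exp p - Real.exp q ≤ Real.exp p * (p - q) := by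
    have h2 := Real.add_one_le_exp (q - p)
    have h3 : Real.exp q = Real.exp p * Real.exp (q - p) := by
      rw [← Real.exp_add]; ring_nf
    nlinarith [Real.exp_pos p]
  have h4 : Real.exp p ≤ Real.exp R := Real.exp_le_exp.2 (le_of_abs_le hp)
  nlinarith [Real.exp_pos p, sub_nonneg.2 hqp]

private lemma fract_sub_le {x u : ℝ} (h0 : 0 ≤ u) (h : u ≤ Int.fract x) :
    Int.fract (x - u) = Int.fract x - u := by
  have hfr : Int.fract x = x - ⌊x⌋ := rfl
  have h1 := Int.lt_floor_add_one x
  have hfl : ⌊x - u⌋ = ⌊x⌋ := by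
    rw [Int.floor_eq_iff]
    constructor
    · rw [hfr] at h; linarith
    · push_cast; linarith
  unfold Int.fract
  rw [hfl]; ring

private lemma fract_sub_gt {x u : ℝ} (h : Int.fract x < u) (h1 : u ≤ 1) :
    Int.fract (x - u) = Int.fract x - u + 1 := by
  have hfr : Int.fract x = x - ⌊x⌋ := rfl
  have h2 := Int.floor_le x
  have hfl : ⌊x - u⌋ = ⌊x⌋ - 1 := by
    rw [Int.floor_eq_iff]
    constructor
    · push_cast; linarith
    · push_cast; rw [hfr] at h; linarith
  unfold Int.fract
  rw [hfl]; push_cast; ring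

private lemma sum_geom_Icc (z : ℂ) (hz : z ≠ 0) (N : ℕ) :
    (∑ n ∈ Finset.Icc (-(N : ℤ)) (N : ℤ), z ^ n) * (z - 1)
      = z ^ ((N : ℤ) + 1) - z ^ (-(N : ℤ)) := by
  have hre : ∑ n ∈ Finset.Icc (-(N : ℤ)) (N : ℤ), z ^ n
      = z ^ (-(N : ℤ)) * ∑ k ∈ Finset.range (2 * N + 1), z ^ k := by
    rw [Finset.mul_sum]
    refine Finset.sum_nbij' (fun n => (n + (N : ℤ)).toNat) (fun k => (k : ℤ) - N) ?_ ?_ ?_ ?_ ?_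
    · intro n hn
      simp only [Finset.mem_Icc] at hn
      simp only [Finset.mem_range]
      omega
    · intro k hk
      simp only [Finset.mem_range] at hk
      simp only [Finset.mem_Icc]
      omega
    · intro n hn
      simp only [Finset.mem_Icc] at hn
      show (((n + (N : ℤ)).toNat : ℤ)) - N = n
      omega
    · intro k hk
      simp only [Finset.mem_range] at hk
      show (((k : ℤ) - N + N).toNat) = k
      omega
    · intro n hn
      simp only [Finset.mem_Icc] at hn
      rw [← zpow_natCast z ((n + (N : ℤ)).toNat), ← zpow_add₀ hz]
      congr 1
      omega
  rw [hre, mul_assoc, geom_sum_mul, mul_sub, mul_one, ← zpow_natCast z (2 * N + 1),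
    ← zpow_add₀ hz]
  congr 2
  push_cast
  ring

private lemma exp_neg_two_pi_int (n : ℤ) : Complex.exp (-(2 * Real.pi * Complex.I * n)) = 1 := by
  rw [show -(2 * (Real.pi:ℂ) * Complex.I * n) = (-n : ℤ) * (2 * Real.pi * Complex.I) by push_cast; ring]
  exact Complex.exp_int_mul_two_pi_mul_I (-n)

private lemma ae_ne_one : ∀ᵐ (v : ℝ) ∂volume, v ≠ 1 := by
  rw [MeasureTheory.ae_iff]
  simp only [not_not, Set.setOf_eq_eq_singleton]
  exact Real.volume_singleton

private lemma coeff_integral {c : ℝ} (hc : c ≠ 0) (n : ℤ) (x : ℝ) :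
    ∫ u in (0:ℝ)..1, Complex.exp (-(c : ℂ) * (Int.fract (x - u) : ℝ))
        * Complex.exp (2 * Real.pi * Complex.I * n * u)
      = Complex.exp (2 * Real.pi * Complex.I * n * x)
        * (1 - Complex.exp (-(c : ℂ))) / ((c : ℂ) + 2 * Real.pi * Complex.I * n) := by
  set D : ℂ := (c : ℂ) + 2 * Real.pi * Complex.I * n with hD
  have hDne : D ≠ 0 := denom_ne hc n
  set g : ℝ → ℂ := fun v => Complex.exp (-(c : ℂ) * (Int.fract v : ℝ))
      * Complex.exp (-(2 * Real.pi * Complex.I * n) * v) with hg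
  have step1 : ∀ u : ℝ, Complex.exp (-(c : ℂ) * (Int.fract (x - u) : ℝ))
      * Complex.exp (2 * Real.pi * Complex.I * n * u)
      = Complex.exp (2 * Real.pi * Complex.I * n * x) * g (x - u) := by
    intro u
    simp only [hg]
    rw [← Complex.exp_add, ← Complex.exp_add, ← Complex.exp_add]
    congr 1
    push_cast
    ring
  simp_rw [step1]
  rw [intervalIntegral.integral_const_mul, intervalIntegral.integral_comp_sub_left g x]
  have hper : Function.Periodic g 1 := by
    intro v
    simp only [hg, Int.fract_add_one]
    have h2 : Complex.exp (-(2 * (Real.pi:ℂ) * Complex.I * n) * ((v + 1 : ℝ) : ℂ))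
        = Complex.exp (-(2 * (Real.pi:ℂ) * Complex.I * n) * (v : ℂ)) := by
      push_cast
      rw [show -(2 * (Real.pi:ℂ) * Complex.I * n) * ((v:ℂ) + 1)
          = -(2 * (Real.pi:ℂ) * Complex.I * n) * v + -(2 * (Real.pi:ℂ) * Complex.I * n) by ring,
        Complex.exp_add, exp_neg_two_pi_int n, mul_one]
    rw [h2]
  have hshift : ∫ v in (x - 1)..(x - 0), g v = ∫ v in (0:ℝ)..1, g v := by
    have h := hper.intervalIntegral_add_eq (x - 1) 0
    simpa using h
  rw [hshift]
  have hval : ∫ v in (0:ℝ)..1, g v = (1 - Complex.exp (-(c:ℂ))) / D := by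
    have hcongr : ∫ v in (0:ℝ)..1, g v = ∫ v in (0:ℝ)..1, Complex.exp (-D * v) := by
      apply intervalIntegral.integral_congr_ae
      filter_upwards [ae_ne_one] with v hv hmem
      rw [Set.uIoc_of_le (by norm_num : (0:ℝ) ≤ 1)] at hmem
      have hfr : Int.fract v = v := Int.fract_eq_self.2 ⟨hmem.1.le, lt_of_le_of_ne hmem.2 hv⟩
      simp only [hg, hfr]
      rw [← Complex.exp_add]
      congr 1
      rw [hD]; push_cast; ring
    rw [hcongr, integral_exp_mul_complex (neg_ne_zero.2 hDne)]
    have he : Complex.exp (-D * ((1:ℝ) : ℂ)) = Complex.exp (-(c:ℂ)) := by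
      rw [hD]
      push_cast
      rw [mul_one, show -((c:ℂ) + 2 * Real.pi * Complex.I * n)
          = -(c:ℂ) + -(2 * (Real.pi:ℂ) * Complex.I * n) by ring,
        Complex.exp_add, exp_neg_two_pi_int n, mul_one]
    rw [he, Complex.ofReal_zero, mul_zero, Complex.exp_zero,
      show Complex.exp (-(c:ℂ)) - 1 = -(1 - Complex.exp (-(c:ℂ))) by ring, neg_div_neg_eq]
  rw [hval, mul_div_assoc]

private lemma exp_two_pi_int' (n : ℤ) : Complex.exp (2 * Real.pi * Complex.I * n) = 1 := by
  have h := Complex.exp_int_mul_two_pi_mul_I n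
  rw [show ((n:ℂ)) * (2 * (Real.pi:ℂ) * Complex.I) = 2 * Real.pi * Complex.I * n by ring] at h
  exact h

private lemma kernel_integral (N : ℕ) :
    ∫ u in (0:ℝ)..1, (∑ n ∈ Finset.Icc (-(N:ℤ)) (N:ℤ),
      Complex.exp (2 * Real.pi * Complex.I * n * u)) = 1 := by
  rw [intervalIntegral.integral_finset_sum]
  · rw [Finset.sum_eq_single (0:ℤ)]
    · simp
    · intro n hn hn0
      have h2 : (2 * (Real.pi:ℂ) * Complex.I * n) ≠ 0 := by
        refine mul_ne_zero (mul_ne_zero (mul_ne_zero two_ne_zero ?_) Complex.I_ne_zero) ?_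
        · exact Complex.ofReal_ne_zero.2 Real.pi_ne_zero
        · exact_mod_cast hn0
      rw [integral_exp_mul_complex h2]
      rw [Complex.ofReal_one, Complex.ofReal_zero, mul_one, mul_zero, Complex.exp_zero,
        exp_two_pi_int' n, sub_self, zero_div]
    · intro h
      exfalso
      apply h
      simp
  · intro n _
    apply Continuous.intervalIntegrable
    fun_prop

private lemma f_intervalIntegrable (c x : ℝ) (a b : ℝ) :
    IntervalIntegrable (fun u => Complex.exp (-(c:ℂ) * (Int.fract (x - u) : ℝ))) volume a b := by
  rw [intervalIntegrable_iff]
  have hmeas : Measurable fun u : ℝ => Complex.exp (-(c:ℂ) * (Int.fract (x - u) : ℝ)) :=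
    Complex.measurable_exp.comp ((Complex.measurable_ofReal.comp
      (measurable_fract.comp (measurable_const.sub measurable_id))).const_mul _)
  apply Integrable.mono' (g := fun _ => Real.exp |c|)
  · exact integrableOn_const measure_Ioc_lt_top.ne
  · exact hmeas.aestronglyMeasurable.restrict
  · filter_upwards with u
    rw [Complex.norm_exp]
    apply Real.exp_le_exp.2
    have h1 := Int.fract_nonneg (x - u)
    have h2 := (Int.fract_lt_one (x - u)).le
    simp only [Complex.neg_re, Complex.mul_re, Complex.ofReal_re, Complex.ofReal_im]
    nlinarith [le_abs_self c, neg_abs_le c, abs_nonneg c]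

private lemma partial_sum_repr {c : ℝ} (hc : c ≠ 0) (x : ℝ) (N : ℕ) :
    (1 - Complex.exp (-(c:ℂ))) * ∑ n ∈ Finset.Icc (-(N:ℤ)) (N:ℤ),
        Complex.exp (2 * Real.pi * Complex.I * n * x) / ((c:ℂ) + 2 * Real.pi * Complex.I * n)
      = ∫ u in (0:ℝ)..1, Complex.exp (-(c:ℂ) * (Int.fract (x - u) : ℝ))
          * (∑ n ∈ Finset.Icc (-(N:ℤ)) (N:ℤ), Complex.exp (2 * Real.pi * Complex.I * n * u)) := by
  have hint : ∀ n : ℤ, IntervalIntegrable (fun u => Complex.exp (-(c:ℂ) * (Int.fract (x - u) : ℝ))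
      * Complex.exp (2 * Real.pi * Complex.I * n * u)) volume 0 1 := by
    intro n
    exact (f_intervalIntegrable c x 0 1).mul_continuousOn (Continuous.continuousOn (by fun_prop))
  calc (1 - Complex.exp (-(c:ℂ))) * ∑ n ∈ Finset.Icc (-(N:ℤ)) (N:ℤ),
        Complex.exp (2 * Real.pi * Complex.I * n * x) / ((c:ℂ) + 2 * Real.pi * Complex.I * n)
      = ∑ n ∈ Finset.Icc (-(N:ℤ)) (N:ℤ), Complex.exp (2 * Real.pi * Complex.I * n * x)
          * (1 - Complex.exp (-(c:ℂ))) / ((c:ℂ) + 2 * Real.pi * Complex.I * n) := by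
        rw [Finset.mul_sum]
        apply Finset.sum_congr rfl
        intro n _
        ring
    _ = ∑ n ∈ Finset.Icc (-(N:ℤ)) (N:ℤ), ∫ u in (0:ℝ)..1,
          Complex.exp (-(c:ℂ) * (Int.fract (x - u) : ℝ))
            * Complex.exp (2 * Real.pi * Complex.I * n * u) := by
        apply Finset.sum_congr rfl
        intro n _
        rw [coeff_integral hc n x]
    _ = ∫ u in (0:ℝ)..1, ∑ n ∈ Finset.Icc (-(N:ℤ)) (N:ℤ),
          Complex.exp (-(c:ℂ) * (Int.fract (x - u) : ℝ))
            * Complex.exp (2 * Real.pi * Complex.I * n * u) := by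
        rw [intervalIntegral.integral_finset_sum]
        intro n _
        exact hint n
    _ = ∫ u in (0:ℝ)..1, Complex.exp (-(c:ℂ) * (Int.fract (x - u) : ℝ))
          * (∑ n ∈ Finset.Icc (-(N:ℤ)) (N:ℤ), Complex.exp (2 * Real.pi * Complex.I * n * u)) := by
        apply intervalIntegral.integral_congr
        intro u _
        simp only [Finset.mul_sum]

set_option maxHeartbeats 1000000 in
theorem fourier_series_of_a_pow_neg_frac (a : ℝ) (ha : 0 < a) (ha1 : a ≠ 1)
    (x : ℝ) (hx : ∀ k : ℤ, x ≠ (k : ℝ)) :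
    Tendsto (fun N : ℕ =>
        ((a - 1) / a : ℂ) * ∑ n ∈ Finset.Icc (-(N : ℤ)) (N : ℤ),
          Complex.exp (2 * Real.pi * Complex.I * n * x)
            / ((Real.log a : ℂ) + 2 * Real.pi * Complex.I * n))
      atTop (nhds ((a ^ (-Int.fract x) : ℝ) : ℂ)) := by
  set c : ℝ := Real.log a with hcdef
  have hc : c ≠ 0 := by
    intro h
    rcases Real.log_eq_zero.1 h with h1 | h1 | h1
    · linarith
    · exact ha1 h1
    · linarith
  set fx : ℝ := Int.fract x with hfxdef
  have hfx1 : fx < 1 := Int.fract_lt_one x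
  have hfx0 : 0 < fx := by
    rcases lt_or_eq_of_le (Int.fract_nonneg x) with h | h
    · exact h
    · exfalso
      apply hx ⌊x⌋
      have h0 : x - (⌊x⌋ : ℝ) = 0 := by
        have : Int.fract x = 0 := h.symm
        unfold Int.fract at this
        linarith
      linarith
  set T : ℂ := Complex.exp (-(c:ℂ) * (fx : ℝ)) with hT
  set F : ℝ → ℂ := fun u => Complex.exp (-(c:ℂ) * (Int.fract (x - u) : ℝ)) with hF
  set H : ℝ → ℂ := fun u => (F u - T) / (Complex.exp (2 * Real.pi * Complex.I * u) - 1) with hH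
  set B : ℝ := |c| * Real.exp |c| / (4 * min fx (1 - fx)) with hBdef
  have hminpos : 0 < min fx (1 - fx) := lt_min hfx0 (by linarith)
  have hB0 : 0 ≤ B := by
    rw [hBdef]
    positivity
  -- pointwise bound for H on Ioc 0 1
  have hHb : ∀ u ∈ Set.Ioc (0:ℝ) 1, ‖H u‖ ≤ B := by
    intro u hu
    obtain ⟨hu0, hu1⟩ := hu
    rcases eq_or_lt_of_le hu1 with h1 | h1
    · subst h1
      have hfr : Int.fract (x - 1) = fx := by
        have h2 := fract_sub_gt (x := x) (u := 1) hfx1 le_rfl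
        rw [h2]; ring
      have hFT : F 1 = T := by
        rw [hF, hT]
        simp only [hfr]
      rw [hH]
      simp only [hFT, sub_self, zero_div, norm_zero]
      exact hB0
    · -- u < 1
      have hden : 4 * min u (1 - u) ≤ ‖Complex.exp (2 * Real.pi * Complex.I * u) - 1‖ := by
        rw [norm_exp_sub_one]
        have hs := sin_lower hu0.le h1.le
        have := le_abs_self (Real.sin (Real.pi * u))
        linarith
      have hmin_u_pos : 0 < min u (1 - u) := lt_min hu0 (by linarith)
      set r : ℝ := Int.fract (x - u) with hr
      have hr0 : 0 ≤ r := Int.fract_nonneg _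
      have hr1 : r < 1 := Int.fract_lt_one _
      have hnum : ‖F u - T‖ ≤ |c| * Real.exp |c| * |fx - r| := by
        have e1 : ((-(c * r) : ℝ) : ℂ) = -(c:ℂ) * r := by push_cast; ring
        have e2 : ((-(c * fx) : ℝ) : ℂ) = -(c:ℂ) * fx := by push_cast; ring
        have hFT : F u - T = ((Real.exp (-(c * r)) - Real.exp (-(c * fx)) : ℝ) : ℂ) := by
          rw [hF, hT, Complex.ofReal_sub, Complex.ofReal_exp, Complex.ofReal_exp, e1, e2]
        rw [hFT, Complex.norm_real, Real.norm_eq_abs]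
        have hfx01 : 0 ≤ fx := hfx0.le
        have hlip := exp_lip (p := -(c * r)) (q := -(c * fx)) (R := |c|)
          (by rw [abs_neg, abs_mul, _root_.abs_of_nonneg hr0]; nlinarith [abs_nonneg c])
          (by rw [abs_neg, abs_mul, _root_.abs_of_nonneg hfx0.le]; nlinarith [abs_nonneg c])
        calc |Real.exp (-(c * r)) - Real.exp (-(c * fx))|
            ≤ Real.exp |c| * |(-(c * r)) - (-(c * fx))| := hlip
          _ = |c| * Real.exp |c| * |fx - r| := by
              rw [show (-(c * r)) - (-(c * fx)) = c * (fx - r) by ring, abs_mul]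
              ring
      have hcase : |fx - r| * min fx (1 - fx) ≤ min u (1 - u) := by
        have hmfx1 : min fx (1 - fx) ≤ fx := min_le_left _ _
        have hmfx2 : min fx (1 - fx) ≤ 1 - fx := min_le_right _ _
        rcases le_or_gt u fx with hcu | hcu
        · have hrv : r = fx - u := fract_sub_le hu0.le hcu
          rw [hrv, show fx - (fx - u) = u by ring, _root_.abs_of_nonneg hu0.le]
          apply le_min
          · nlinarith
          · nlinarith
        · have hrv : r = fx - u + 1 := fract_sub_gt hcu h1.le
          rw [hrv, show fx - (fx - u + 1) = u - 1 by ring, abs_of_nonpos (by linarith), neg_sub]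
          apply le_min
          · nlinarith
          · nlinarith
      rw [hH, norm_div]
      rw [div_le_iff₀ (by linarith : (0:ℝ) < ‖Complex.exp (2 * Real.pi * Complex.I * u) - 1‖)]
      calc ‖F u - T‖ ≤ |c| * Real.exp |c| * |fx - r| := hnum
        _ ≤ B * (4 * min u (1 - u)) := by
            rw [hBdef, div_mul_eq_mul_div, le_div_iff₀ (by positivity)]
            have hec := Real.exp_pos |c|
            nlinarith [abs_nonneg c, abs_nonneg (fx - r),
              mul_nonneg (abs_nonneg c) hec.le, hcase]
        _ ≤ B * ‖Complex.exp (2 * Real.pi * Complex.I * u) - 1‖ := by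
            exact mul_le_mul_of_nonneg_left hden hB0
  -- measurability of H
  have hFmeas : Measurable F := by
    rw [hF]
    exact Complex.measurable_exp.comp ((Complex.measurable_ofReal.comp
      (measurable_fract.comp (measurable_const.sub measurable_id))).const_mul _)
  have hHmeas : Measurable H := by
    rw [hH]
    exact (hFmeas.sub measurable_const).div
      ((Complex.measurable_exp.comp ((Complex.measurable_ofReal.comp measurable_id).const_mul _)).sub
        measurable_const)
  have hHint : IntervalIntegrable H volume 0 1 := by
    rw [intervalIntegrable_iff, Set.uIoc_of_le (by norm_num : (0:ℝ) ≤ 1)]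
    apply Integrable.mono' (g := fun _ => B)
    · exact integrableOn_const measure_Ioc_lt_top.ne
    · exact hHmeas.aestronglyMeasurable.restrict
    · exact (ae_restrict_iff' measurableSet_Ioc).2 (Filter.Eventually.of_forall hHb)
  -- difference formula
  set S : ℕ → ℂ := fun N => ∑ n ∈ Finset.Icc (-(N : ℤ)) (N : ℤ),
      Complex.exp (2 * Real.pi * Complex.I * n * x)
        / ((c : ℂ) + 2 * Real.pi * Complex.I * n) with hS
  set K : ℂ := 1 - Complex.exp (-(c:ℂ)) with hK
  set A₁ : ℕ → ℂ := fun N => ∫ u in (0:ℝ)..1,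
      H u * Complex.exp (2 * Real.pi * Complex.I * (((N:ℝ) + 1) : ℝ) * u) with hA₁
  set A₂ : ℕ → ℂ := fun N => ∫ u in (0:ℝ)..1,
      H u * Complex.exp (2 * Real.pi * Complex.I * ((-(N:ℝ)) : ℝ) * u) with hA₂
  have hdiff_eq : ∀ N : ℕ, K * S N - T = A₁ N - A₂ N := by
    intro N
    have hDcont : Continuous (fun u : ℝ => ∑ n ∈ Finset.Icc (-(N:ℤ)) (N:ℤ),
        Complex.exp (2 * Real.pi * Complex.I * n * u)) := by
      apply continuous_finset_sum
      intro i _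
      fun_prop
    have hFD_int : IntervalIntegrable (fun u => F u * ∑ n ∈ Finset.Icc (-(N:ℤ)) (N:ℤ),
        Complex.exp (2 * Real.pi * Complex.I * n * u)) volume 0 1 := by
      exact (f_intervalIntegrable c x 0 1).mul_continuousOn hDcont.continuousOn
    have hTD_int : IntervalIntegrable (fun u => T * ∑ n ∈ Finset.Icc (-(N:ℤ)) (N:ℤ),
        Complex.exp (2 * Real.pi * Complex.I * n * u)) volume 0 1 := by
      exact (continuous_const.mul hDcont).intervalIntegrable 0 1
    have h1 : K * S N = ∫ u in (0:ℝ)..1, F u * ∑ n ∈ Finset.Icc (-(N:ℤ)) (N:ℤ),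
        Complex.exp (2 * Real.pi * Complex.I * n * u) := partial_sum_repr hc x N
    have h2 : T = ∫ u in (0:ℝ)..1, T * ∑ n ∈ Finset.Icc (-(N:ℤ)) (N:ℤ),
        Complex.exp (2 * Real.pi * Complex.I * n * u) := by
      rw [intervalIntegral.integral_const_mul, kernel_integral N, mul_one]
    have h3 : K * S N - T = ∫ u in (0:ℝ)..1, (F u - T) * ∑ n ∈ Finset.Icc (-(N:ℤ)) (N:ℤ),
        Complex.exp (2 * Real.pi * Complex.I * n * u) := by
      rw [h1]
      conv_lhs => rw [h2]
      rw [← intervalIntegral.integral_sub hFD_int hTD_int]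
      apply intervalIntegral.integral_congr
      intro u _
      simp only [sub_mul]
    have h4 : (∫ u in (0:ℝ)..1, (F u - T) * ∑ n ∈ Finset.Icc (-(N:ℤ)) (N:ℤ),
        Complex.exp (2 * Real.pi * Complex.I * n * u))
        = ∫ u in (0:ℝ)..1,
            (H u * Complex.exp (2 * Real.pi * Complex.I * (((N:ℝ) + 1) : ℝ) * u)
              - H u * Complex.exp (2 * Real.pi * Complex.I * ((-(N:ℝ)) : ℝ) * u)) := by
      apply intervalIntegral.integral_congr_ae
      filter_upwards [ae_ne_one] with u hune hmem
      rw [Set.uIoc_of_le (by norm_num : (0:ℝ) ≤ 1)] at hmem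
      set z : ℂ := Complex.exp (2 * Real.pi * Complex.I * u) with hz
      have hz0 : z ≠ 0 := Complex.exp_ne_zero _
      have hz1 : z ≠ 1 := by
        intro hzeq
        rw [hz, Complex.exp_eq_one_iff] at hzeq
        obtain ⟨n, hn⟩ := hzeq
        have h2pi : (2 * (Real.pi:ℂ) * Complex.I) ≠ 0 := by
          refine mul_ne_zero (mul_ne_zero two_ne_zero ?_) Complex.I_ne_zero
          exact Complex.ofReal_ne_zero.2 Real.pi_ne_zero
        have hun : (u : ℂ) = (n : ℂ) := by
          have : (2 * (Real.pi:ℂ) * Complex.I) * u = (2 * (Real.pi:ℂ) * Complex.I) * n := by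
            rw [hn]; ring
          exact mul_left_cancel₀ h2pi this
        have hureal : u = (n : ℝ) := by exact_mod_cast hun
        have h0n : (0:ℝ) < n := by rw [← hureal]; exact hmem.1
        have h1n : (n:ℝ) ≤ 1 := by rw [← hureal]; exact hmem.2
        have h0n' : 0 < n := by exact_mod_cast h0n
        have h1n' : n ≤ 1 := by exact_mod_cast h1n
        have : n = 1 := by omega
        rw [this] at hureal
        exact hune (by simpa using hureal)
      have hz1' : z - 1 ≠ 0 := sub_ne_zero.2 hz1
      have hsum : (∑ n ∈ Finset.Icc (-(N:ℤ)) (N:ℤ),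
          Complex.exp (2 * Real.pi * Complex.I * n * u))
          = (z ^ ((N:ℤ) + 1) - z ^ (-(N:ℤ))) / (z - 1) := by
        rw [eq_div_iff hz1', ← sum_geom_Icc z hz0 N]
        congr 1
        apply Finset.sum_congr rfl
        intro n _
        rw [exp_zpow n u, hz]
      have hp1 : z ^ ((N:ℤ) + 1) = Complex.exp (2 * Real.pi * Complex.I * (((N:ℝ) + 1) : ℝ) * u) := by
        rw [← exp_zpow ((N:ℤ) + 1) u]
        congr 2
        push_cast
        ring
      have hp2 : z ^ (-(N:ℤ)) = Complex.exp (2 * Real.pi * Complex.I * ((-(N:ℝ)) : ℝ) * u) := by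
        rw [← exp_zpow (-(N:ℤ)) u]
        congr 2
        push_cast
        ring
      rw [hsum, hp1, hp2, hH]
      have hzc : Complex.exp (2 * Real.pi * Complex.I * u) - 1 ≠ 0 := hz1'
      rw [hz]
      field_simp
    have h5 : (∫ u in (0:ℝ)..1,
            (H u * Complex.exp (2 * Real.pi * Complex.I * (((N:ℝ) + 1) : ℝ) * u)
              - H u * Complex.exp (2 * Real.pi * Complex.I * ((-(N:ℝ)) : ℝ) * u)))
        = A₁ N - A₂ N := by
      rw [hA₁, hA₂]
      apply intervalIntegral.integral_sub
      · exact hHint.mul_continuousOn (Continuous.continuousOn (by fun_prop))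
      · exact hHint.mul_continuousOn (Continuous.continuousOn (by fun_prop))
    rw [h3, h4, h5]
  -- Riemann-Lebesgue
  set G : ℝ → ℂ := Set.indicator (Set.Ioc (0:ℝ) 1) H with hG
  have hRL := Real.tendsto_integral_exp_smul_cocompact G
  have hΦ : ∀ w : ℝ, (∫ v : ℝ, Real.fourierChar (-(v * w)) • G v)
      = ∫ u in (0:ℝ)..1, H u * Complex.exp (2 * Real.pi * Complex.I * ((-w) : ℝ) * u) := by
    intro w
    rw [intervalIntegral.integral_of_le (by norm_num : (0:ℝ) ≤ 1),
      ← MeasureTheory.integral_indicator measurableSet_Ioc]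
    congr 1
    funext v
    rw [hG]
    by_cases hv : v ∈ Set.Ioc (0:ℝ) 1
    · rw [Set.indicator_of_mem hv, Set.indicator_of_mem hv, Circle.smul_def, smul_eq_mul,
        Real.fourierChar_apply, mul_comm]
      congr 1
      push_cast
      ring
    · rw [Set.indicator_of_notMem hv, Set.indicator_of_notMem hv, smul_zero]
  have hA₁lim : Tendsto A₁ atTop (nhds 0) := by
    have hseq : Tendsto (fun N : ℕ => -((N:ℝ) + 1)) atTop (cocompact ℝ) := by
      have h1 : Tendsto (fun N : ℕ => -((N:ℝ) + 1)) atTop atBot :=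
        Filter.tendsto_neg_atTop_atBot.comp
          (Filter.tendsto_atTop_add_const_right _ 1 tendsto_natCast_atTop_atTop)
      exact h1.mono_right (by rw [cocompact_eq_atBot_atTop]; exact le_sup_left)
    have h := hRL.comp hseq
    refine h.congr fun N => ?_
    show (∫ v : ℝ, Real.fourierChar (-(v * (-((N:ℝ) + 1)))) • G v) = A₁ N
    rw [hΦ, hA₁]
    apply intervalIntegral.integral_congr
    intro u _
    congr 2
    push_cast
    ring
  have hA₂lim : Tendsto A₂ atTop (nhds 0) := by
    have hseq : Tendsto (fun N : ℕ => ((N:ℝ))) atTop (cocompact ℝ) := by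
      refine Filter.Tendsto.mono_right tendsto_natCast_atTop_atTop ?_
      rw [cocompact_eq_atBot_atTop]; exact le_sup_right
    have h := hRL.comp hseq
    refine h.congr fun N => ?_
    show (∫ v : ℝ, Real.fourierChar (-(v * (N:ℝ))) • G v) = A₂ N
    rw [hΦ, hA₂]
  have hTlim : Tendsto (fun N => K * S N) atTop (nhds T) := by
    have hdiff : Tendsto (fun N => K * S N - T) atTop (nhds 0) := by
      have h := hA₁lim.sub hA₂lim
      rw [sub_zero] at h
      exact h.congr fun N => (hdiff_eq N).symm
    have h2 := hdiff.add_const T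
    simp only [sub_add_cancel, zero_add] at h2
    exact h2
  have hKa : ((a - 1) / a : ℂ) = K := by
    have h1 : Real.exp (-c) = a⁻¹ := by rw [Real.exp_neg, hcdef, Real.exp_log ha]
    have h2 : Complex.exp (-(c:ℂ)) = ((a⁻¹ : ℝ) : ℂ) := by
      rw [show (-(c:ℂ)) = ((-c : ℝ) : ℂ) by push_cast; ring, ← Complex.ofReal_exp, h1]
    have haC : (a:ℂ) ≠ 0 := Complex.ofReal_ne_zero.2 ha.ne'
    rw [hK, h2]
    push_cast
    field_simp
  have hTa : ((a ^ (-fx) : ℝ) : ℂ) = T := by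
    rw [hT, hfxdef, Real.rpow_def_of_pos ha, ← hcdef,
      show c * (-(Int.fract x)) = -(c * Int.fract x) by ring, Complex.ofReal_exp]
    congr 1
    push_cast
    rw [← hfxdef]
    ring
  rw [hKa, hTa]
  exact hTlim
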